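/- Let f : ℝᵈ → ℝ be convex and differentiable, g : ℝᵈ → ℝ be convex, and suppose x* minimizes f + g. Define f̃(x) := f(x) - ⟨∇f(x*), x⟩ and g̃(x) := g(x) + ⟨∇f(x*), x⟩. Then f̃ + g̃ = f + g everywhere, x* minimizes f̃, and x* minimizes g̃. -/

import Mathlib

open scoped RealInnerProductSpace

private lemma line_hasDerivAt {d : ℕ} (f : EuclideanSpace ℝ (Fin d) → ℝ)
    (x v : EuclideanSpace ℝ (Fin d)) (hfd : DifferentiableAt ℝ f x) :
    HasDerivAt (fun t : ℝ => f (x + t • v)) ⟪gradient f x, v⟫ 0 := by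
  have hG : HasFDerivAt f
      (InnerProductSpace.toDual ℝ (EuclideanSpace ℝ (Fin d)) (gradient f x)) x :=
    hasGradientAt_iff_hasFDerivAt.mp hfd.hasGradientAt
  have hline : HasDerivAt (fun t : ℝ => x + t • v) v 0 := by
    simpa using ((hasDerivAt_id (0 : ℝ)).smul_const v).const_add x
  have hG' : HasFDerivAt f
      (InnerProductSpace.toDual ℝ (EuclideanSpace ℝ (Fin d)) (gradient f x))
      ((fun t : ℝ => x + t • v) 0) := by simpa using hG
  have := hG'.comp_hasDerivAt 0 hline
  simpa [InnerProductSpace.toDual_apply_apply, Function.comp_def] using this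

private lemma line_convex {d : ℕ} (f : EuclideanSpace ℝ (Fin d) → ℝ)
    (hf : ConvexOn ℝ Set.univ f) (x v : EuclideanSpace ℝ (Fin d)) :
    ConvexOn ℝ Set.univ (fun t : ℝ => f (x + t • v)) := by
  have h := hf.comp_affineMap (AffineMap.lineMap x (x + v))
  have : (AffineMap.lineMap x (x + v) : ℝ → EuclideanSpace ℝ (Fin d)) ⁻¹' Set.univ
      = Set.univ := Set.preimage_univ
  rw [this] at h
  convert h using 2 with t
  case e'_12 => simp [AffineMap.lineMap_apply, add_comm]
  all_goals rfl

theorem stmt0 {d : ℕ} (f g : EuclideanSpace ℝ (Fin d) → ℝ)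
    (hf : ConvexOn ℝ Set.univ f) (hfd : Differentiable ℝ f)
    (hg : ConvexOn ℝ Set.univ g)
    (xstar : EuclideanSpace ℝ (Fin d))
    (hmin : ∀ x, f xstar + g xstar ≤ f x + g x) :
    (∀ x, (f x - ⟪gradient f xstar, x⟫) + (g x + ⟪gradient f xstar, x⟫) = f x + g x) ∧
    (∀ x, f xstar - ⟪gradient f xstar, xstar⟫ ≤ f x - ⟪gradient f xstar, x⟫) ∧
    (∀ x, g xstar + ⟪gradient f xstar, xstar⟫ ≤ g x + ⟪gradient f xstar, x⟫) := by
  refine ⟨fun x => by ring, ?_, ?_⟩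
  · -- x* minimizes f̃
    intro x
    set v := x - xstar with hv
    have hd : HasDerivAt (fun t : ℝ => f (xstar + t • v)) ⟪gradient f xstar, v⟫ 0 :=
      line_hasDerivAt f xstar v (hfd xstar)
    have hc := line_convex f hf xstar v
    have hs := hc.le_slope_of_hasDerivAt (Set.mem_univ (0 : ℝ)) (Set.mem_univ (1 : ℝ))
      one_pos hd
    have e1 : xstar + v = x := by rw [hv]; abel
    rw [slope_def_field] at hs
    simp only [one_smul, zero_smul, add_zero, sub_zero, div_one, e1] at hs
    have hinner : ⟪gradient f xstar, v⟫ = ⟪gradient f xstar, x⟫ - ⟪gradient f xstar, xstar⟫ := by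
      rw [hv, inner_sub_right]
    simp only [div_one, hinner] at hs
    linarith
  · -- x* minimizes g̃
    intro x
    set v := x - xstar with hv
    have hd : HasDerivAt (fun t : ℝ => f (xstar + t • v)) ⟪gradient f xstar, v⟫ 0 :=
      line_hasDerivAt f xstar v (hfd xstar)
    -- slope inequality for t ∈ (0,1]
    have key : ∀ t : ℝ, 0 < t → t ≤ 1 →
        g xstar - g x ≤ slope (fun t : ℝ => f (xstar + t • v)) 0 t := by
      intro t ht0 ht1
      have hxt : xstar + t • v = (1 - t) • xstar + t • x := by
        rw [hv]; module
      have hgxt : g (xstar + t • v) ≤ (1 - t) * g xstar + t * g x := by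
        rw [hxt]
        exact hg.2 (Set.mem_univ xstar) (Set.mem_univ x) (by linarith) ht0.le (by ring)
      have hmt := hmin (xstar + t • v)
      rw [slope_def_field]
      simp only [zero_smul, add_zero, sub_zero]
      rw [le_div_iff₀ ht0]
      nlinarith
    have htend : Filter.Tendsto (slope (fun t : ℝ => f (xstar + t • v)) 0)
        (nhdsWithin 0 (Set.Ioi 0)) (nhds ⟪gradient f xstar, v⟫) :=
      (hasDerivAt_iff_tendsto_slope.mp hd).mono_left
        (nhdsWithin_mono 0 (fun t ht => ne_of_gt ht))
    have hge : g xstar - g x ≤ ⟪gradient f xstar, v⟫ := by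
      refine ge_of_tendsto htend ?_
      filter_upwards [Ioo_mem_nhdsGT_of_mem (Set.mem_Ico.mpr ⟨le_refl 0, one_pos⟩)]
        with t ht
      exact key t ht.1 ht.2.le
    have hinner : ⟪gradient f xstar, v⟫ = ⟪gradient f xstar, x⟫ - ⟪gradient f xstar, xstar⟫ := by
      rw [hv, inner_sub_right]
    rw [hinner] at hge
    linarith
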